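/- Let G=(V,E) be a finite simple undirected graph, let x : E → ℝ≥0 satisfy ∑_{e ∈ δ(v)} x_e ≤ 1 for every vertex v ∈ V, and let A be a random subset of V whose distribution satisfies (i) Pr[v ∈ A] = ∑_{e ∈ δ(v)} x_e for every v ∈ V, and (ii) Pr[u ∈ A and v ∈ A] = Pr[u ∈ A] · Pr[v ∈ A] for every edge {u,v} ∈ E. Let z be an extreme point (vertex) of the polytope Q = { y ∈ ℝ^E : y ≥ 0 and ∑_{e ∈ δ(v)} y_e = ∑_{e ∈ δ(v)} x_e for all v ∈ V }. Then |supp(z)| ≤ |V|, and there exists a matching M ⊆ E of G such that E[ |{ e ∈ M : both endpoints of e lie in A }| ] ≥ ∑_{e ∈ E} z_e² ≥ (∑_{e ∈ E₁} z_e)² / |E₁| + (∑_{e ∈ E₂} z_e)² / |E₂| for every pair of disjoint nonempty sets E₁, E₂ ⊆ supp(z). -/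

import Mathlib

open scoped Classical
open Finset

private lemma stmt4_greedy {V : Type} [Fintype V] [DecidableEq V] (G : SimpleGraph V)
    [DecidableRel G.Adj] (z : Sym2 V → ℝ) (hznn : ∀ e, 0 ≤ z e) (W : Sym2 V → ℝ)
    (hW : ∀ u v : V, G.Adj u v →
      z s(u, v) * ((∑ f ∈ G.edgeFinset.filter (fun f => u ∈ f), z f)
        + (∑ f ∈ G.edgeFinset.filter (fun f => v ∈ f), z f) - z s(u, v)) ≤ W s(u, v)) :
    ∀ F : Finset (Sym2 V), F ⊆ G.edgeFinset →
      ∃ M, M ⊆ F ∧ (∀ e ∈ M, ∀ f ∈ M, e ≠ f → ∀ v : V, v ∈ e → v ∉ f) ∧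
        ∑ f ∈ F, z f ^ 2 ≤ ∑ e ∈ M, W e := by
  intro F
  induction F using Finset.strongInduction with
  | _ F ih =>
    intro hF
    rcases F.eq_empty_or_nonempty with rfl | hne
    · exact ⟨∅, Finset.Subset.refl _, by simp, by simp⟩
    obtain ⟨u, v, heF, hemax⟩ : ∃ a b, s(a, b) ∈ F ∧ ∀ f ∈ F, z f ≤ z s(a, b) := by
      obtain ⟨e, heF, hemax⟩ := F.exists_max_image z hne
      induction e using Sym2.ind with
      | _ a b => exact ⟨a, b, heF, hemax⟩
    have heE : s(u, v) ∈ G.edgeFinset := hF heF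
    have hadj : G.Adj u v := by
      rwa [SimpleGraph.mem_edgeFinset, SimpleGraph.mem_edgeSet] at heE
    have hssub : F.filter (fun f => u ∉ f ∧ v ∉ f) ⊂ F := by
      refine (Finset.ssubset_iff_of_subset (Finset.filter_subset _ _)).mpr ⟨s(u,v), heF, ?_⟩
      simp
    obtain ⟨M', hM'sub, hmatch', hsum'⟩ :=
      ih _ hssub ((Finset.filter_subset _ _).trans hF)
    have heM' : s(u, v) ∉ M' := by
      intro h
      have := Finset.mem_filter.mp (hM'sub h)
      simp at this
    refine ⟨insert s(u,v) M', ?_, ?_, ?_⟩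
    · intro a ha
      rcases Finset.mem_insert.mp ha with rfl | h
      · exact heF
      · exact (Finset.filter_subset _ _) (hM'sub h)
    · intro a ha b hb hab w hwa
      rcases Finset.mem_insert.mp ha with rfl | ha' <;> rcases Finset.mem_insert.mp hb with rfl | hb'
      · exact absurd rfl hab
      · have hb'' := Finset.mem_filter.mp (hM'sub hb')
        rcases Sym2.mem_iff.mp hwa with rfl | rfl
        · exact hb''.2.1
        · exact hb''.2.2
      · have ha'' := Finset.mem_filter.mp (hM'sub ha')
        intro hwb
        rcases Sym2.mem_iff.mp hwb with rfl | rfl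
        · exact ha''.2.1 hwa
        · exact ha''.2.2 hwa
      · exact hmatch' a ha' b hb' hab w hwa
    · rw [Finset.sum_insert heM']
      have hsplit := Finset.sum_filter_add_sum_filter_not F (fun f => u ∉ f ∧ v ∉ f)
        (fun f => z f ^ 2)
      have hkey : ∑ f ∈ F.filter (fun f => ¬(u ∉ f ∧ v ∉ f)), z f ^ 2 ≤ W s(u,v) := by
        have hstep1 : ∑ f ∈ F.filter (fun f => ¬(u ∉ f ∧ v ∉ f)), z f ^ 2
            ≤ z s(u,v) * ∑ f ∈ F.filter (fun f => ¬(u ∉ f ∧ v ∉ f)), z f := by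
          rw [Finset.mul_sum]
          refine Finset.sum_le_sum fun f hf => ?_
          have hfF : f ∈ F := (Finset.mem_filter.mp hf).1
          have h1 := hemax f hfF
          nlinarith [hznn f]
        have hTsub : F.filter (fun f => ¬(u ∉ f ∧ v ∉ f)) ⊆
            G.edgeFinset.filter (fun f => u ∈ f)
              ∪ (G.edgeFinset.filter (fun f => v ∈ f)).erase s(u,v) := by
          intro f hf
          rw [Finset.mem_filter, not_and_or, not_not, not_not] at hf
          obtain ⟨hfF, hcase⟩ := hf
          by_cases hu : u ∈ f
          · exact Finset.mem_union_left _ (Finset.mem_filter.mpr ⟨hF hfF, hu⟩)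
          · refine Finset.mem_union_right _ (Finset.mem_erase.mpr
              ⟨?_, Finset.mem_filter.mpr ⟨hF hfF, hcase.resolve_left hu⟩⟩)
            rintro rfl
            exact hu (Sym2.mem_mk_left u v)
        have h2 : ∑ f ∈ F.filter (fun f => ¬(u ∉ f ∧ v ∉ f)), z f
            ≤ (∑ f ∈ G.edgeFinset.filter (fun f => u ∈ f), z f)
              + (∑ f ∈ G.edgeFinset.filter (fun f => v ∈ f), z f) - z s(u,v) := by
          have hA := Finset.sum_le_sum_of_subset_of_nonneg hTsub (fun f _ _ => hznn f)
          have hui := Finset.sum_union_inter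
            (s₁ := G.edgeFinset.filter (fun f => u ∈ f))
            (s₂ := (G.edgeFinset.filter (fun f => v ∈ f)).erase s(u,v)) (f := z)
          have hBe : ∑ f ∈ (G.edgeFinset.filter (fun f => v ∈ f)).erase s(u,v), z f
              = (∑ f ∈ G.edgeFinset.filter (fun f => v ∈ f), z f) - z s(u,v) :=
            Finset.sum_erase_eq_sub (Finset.mem_filter.mpr ⟨heE, Sym2.mem_mk_right u v⟩)
          have hintnn : 0 ≤ ∑ f ∈ (G.edgeFinset.filter (fun f => u ∈ f))
              ∩ ((G.edgeFinset.filter (fun f => v ∈ f)).erase s(u,v)), z f :=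
            Finset.sum_nonneg fun f _ => hznn f
          linarith
        have h3 := mul_le_mul_of_nonneg_left h2 (hznn s(u,v))
        have h4 := hW u v hadj
        linarith
      linarith

theorem stmt_4 {V : Type} [Fintype V] [DecidableEq V]
    (G : SimpleGraph V) [DecidableRel G.Adj]
    (x : Sym2 V → ℝ) (hx : ∀ e ∈ G.edgeFinset, 0 ≤ x e)
    (hdeg : ∀ v : V, ∑ e ∈ G.edgeFinset.filter (fun e => v ∈ e), x e ≤ 1)
    (p : Finset V → ℝ) (hp0 : ∀ S : Finset V, 0 ≤ p S)
    (hp1 : ∑ S : Finset V, p S = 1)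
    (hmarg : ∀ v : V,
      ∑ S ∈ (Finset.univ : Finset (Finset V)).filter (fun S => v ∈ S), p S
        = ∑ e ∈ G.edgeFinset.filter (fun e => v ∈ e), x e)
    (hind : ∀ u v : V, G.Adj u v →
      ∑ S ∈ (Finset.univ : Finset (Finset V)).filter (fun S => u ∈ S ∧ v ∈ S), p S
        = (∑ S ∈ (Finset.univ : Finset (Finset V)).filter (fun S => u ∈ S), p S)
          * (∑ S ∈ (Finset.univ : Finset (Finset V)).filter (fun S => v ∈ S), p S))
    (z : Sym2 V → ℝ)
    (hz : z ∈ Set.extremePoints ℝ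
      {y : Sym2 V → ℝ | (∀ e, e ∉ G.edgeFinset → y e = 0) ∧ (∀ e, 0 ≤ y e) ∧
        ∀ v : V, ∑ e ∈ G.edgeFinset.filter (fun e => v ∈ e), y e
          = ∑ e ∈ G.edgeFinset.filter (fun e => v ∈ e), x e}) :
    (G.edgeFinset.filter (fun e => 0 < z e)).card ≤ Fintype.card V ∧
    ∃ M : Finset (Sym2 V), M ⊆ G.edgeFinset ∧
      (∀ e ∈ M, ∀ f ∈ M, e ≠ f → ∀ v : V, v ∈ e → v ∉ f) ∧
      (∑ e ∈ G.edgeFinset, (z e) ^ 2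
        ≤ ∑ S : Finset V, p S * ((M.filter (fun e => ∀ v ∈ e, v ∈ S)).card : ℝ)) ∧
      ∀ E₁ E₂ : Finset (Sym2 V),
        E₁ ⊆ G.edgeFinset.filter (fun e => 0 < z e) →
        E₂ ⊆ G.edgeFinset.filter (fun e => 0 < z e) →
        Disjoint E₁ E₂ → E₁.Nonempty → E₂.Nonempty →
        (∑ e ∈ E₁, z e) ^ 2 / (E₁.card : ℝ) + (∑ e ∈ E₂, z e) ^ 2 / (E₂.card : ℝ)
          ≤ ∑ e ∈ G.edgeFinset, (z e) ^ 2 := by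
  obtain ⟨⟨hz0, hznn, hzdeg⟩, hzext⟩ := hz
  constructor
  · -- |supp z| ≤ |V|
    by_contra hcard
    push_neg at hcard
    set S : Finset (Sym2 V) := G.edgeFinset.filter (fun e => 0 < z e) with hS
    have hScard : Fintype.card V < S.card := hcard
    let L : (↥S → ℝ) →ₗ[ℝ] (V → ℝ) :=
      { toFun := fun w v => ∑ e : ↥S, w e * (if v ∈ (e : Sym2 V) then (1:ℝ) else 0)
        map_add' := by
          intro a b; funext v
          simp only [Pi.add_apply, add_mul, Finset.sum_add_distrib]
        map_smul' := by
          intro c a; funext v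
          simp only [RingHom.id_apply, Pi.smul_apply, smul_eq_mul, Finset.mul_sum, mul_assoc] }
    have hLni : ¬ Function.Injective L := by
      intro hinj
      have h1 := LinearMap.finrank_le_finrank_of_injective hinj
      rw [Module.finrank_pi, Module.finrank_pi, Fintype.card_coe] at h1
      omega
    obtain ⟨a, b, hab, hne⟩ := Function.not_injective_iff.mp hLni
    set w : Sym2 V → ℝ := fun e => if h : e ∈ S then (a - b) ⟨e, h⟩ else 0 with hw
    have hLw : ∀ v, ∑ e : ↥S, (a - b) e * (if v ∈ (e : Sym2 V) then (1:ℝ) else 0) = 0 := by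
      intro v
      have : L (a - b) = 0 := by rw [map_sub, hab, sub_self]
      exact congrFun this v
    have hker : ∀ v, ∑ e ∈ G.edgeFinset.filter (fun e => v ∈ e), w e = 0 := by
      intro v
      have hsub : S.filter (fun e => v ∈ e) ⊆ G.edgeFinset.filter (fun e => v ∈ e) :=
        Finset.filter_subset_filter _ (Finset.filter_subset _ _)
      rw [← Finset.sum_subset hsub (by
        intro e he hne'
        have hvS : e ∉ S := by
          intro h
          exact hne' (Finset.mem_filter.mpr ⟨h, (Finset.mem_filter.mp he).2⟩)
        simp [hw, hvS])]
      calc ∑ e ∈ S.filter (fun e => v ∈ e), w e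
          = ∑ e ∈ S, if v ∈ e then w e else 0 := Finset.sum_filter _ _
        _ = ∑ e : ↥S, (if v ∈ (e : Sym2 V) then w e else 0) :=
            (Finset.sum_coe_sort S (fun e => if v ∈ e then w e else 0)).symm
        _ = ∑ e : ↥S, (a - b) e * (if v ∈ (e : Sym2 V) then (1:ℝ) else 0) := by
            refine Finset.sum_congr rfl fun e _ => ?_
            simp only [hw]
            rw [dif_pos e.2]
            simp only [Subtype.coe_eta]
            split_ifs <;> ring
        _ = 0 := hLw v
    have hSne : S.Nonempty := Finset.card_pos.mp (by omega)
    obtain ⟨e₀, he₀, hmin⟩ := S.exists_min_image (fun e => z e / (|w e| + 1)) hSne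
    set ε : ℝ := z e₀ / (|w e₀| + 1) with hε
    have hεpos : 0 < ε := by
      have : 0 < z e₀ := (Finset.mem_filter.mp he₀).2
      positivity
    have hnn : ∀ e, 0 ≤ z e + ε * w e ∧ 0 ≤ z e - ε * w e := by
      intro e
      by_cases heS : e ∈ S
      · have h1 : ε ≤ z e / (|w e| + 1) := hmin e heS
        have h2 : 0 < |w e| + 1 := by positivity
        have h3 : ε * (|w e| + 1) ≤ z e := by
          rw [← le_div_iff₀ h2]; exact h1
        have h4 := le_abs_self (w e)
        have h5 := neg_abs_le (w e)
        constructor <;> nlinarith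
      · simp [hw, heS, hznn e]
    have hwE : ∀ e, e ∉ G.edgeFinset → w e = 0 := by
      intro e he
      have : e ∉ S := fun h => he (Finset.mem_filter.mp h).1
      simp [hw, this]
    have hy₁ : (fun e => z e + ε * w e) ∈
        {y : Sym2 V → ℝ | (∀ e, e ∉ G.edgeFinset → y e = 0) ∧ (∀ e, 0 ≤ y e) ∧
          ∀ v : V, ∑ e ∈ G.edgeFinset.filter (fun e => v ∈ e), y e
            = ∑ e ∈ G.edgeFinset.filter (fun e => v ∈ e), x e} := by
      refine ⟨fun e he => ?_, fun e => (hnn e).1, fun v => ?_⟩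
      · show z e + ε * w e = 0
        rw [hz0 e he, hwE e he]; ring
      rw [Finset.sum_add_distrib, ← Finset.mul_sum, hker v, hzdeg v]; ring
    have hy₂ : (fun e => z e - ε * w e) ∈
        {y : Sym2 V → ℝ | (∀ e, e ∉ G.edgeFinset → y e = 0) ∧ (∀ e, 0 ≤ y e) ∧
          ∀ v : V, ∑ e ∈ G.edgeFinset.filter (fun e => v ∈ e), y e
            = ∑ e ∈ G.edgeFinset.filter (fun e => v ∈ e), x e} := by
      refine ⟨fun e he => ?_, fun e => (hnn e).2, fun v => ?_⟩
      · show z e - ε * w e = 0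
        rw [hz0 e he, hwE e he]; ring
      rw [Finset.sum_sub_distrib, ← Finset.mul_sum, hker v, hzdeg v]; ring
    have hseg : z ∈ openSegment ℝ (fun e => z e + ε * w e) (fun e => z e - ε * w e) := by
      refine ⟨1/2, 1/2, by norm_num, by norm_num, by norm_num, ?_⟩
      funext e
      simp only [Pi.add_apply, Pi.smul_apply, smul_eq_mul]
      ring
    have heq := (hzext hy₁ hy₂ hseg)
    have hw0 : ∀ e, w e = 0 := by
      intro e
      have := congrFun heq e
      nlinarith [hεpos]
    refine hne (sub_eq_zero.mp ?_)
    funext i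
    have h := hw0 i.1
    simp only [hw] at h
    rw [dif_pos i.2] at h
    simp only [Subtype.coe_eta] at h
    simpa using h
  · -- matching part
    set X : V → ℝ := fun v => ∑ e ∈ G.edgeFinset.filter (fun e => v ∈ e), z e with hX
    set W : Sym2 V → ℝ := Sym2.lift ⟨fun u v => X u * X v, fun u v => mul_comm _ _⟩ with hWdef
    have hWmk : ∀ u v : V, W s(u, v) = X u * X v := fun u v => rfl
    have hzleX : ∀ u v : V, G.Adj u v → z s(u,v) ≤ X u := by
      intro u v hadj
      refine Finset.single_le_sum (fun e _ => hznn e) ?_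
      exact Finset.mem_filter.mpr ⟨SimpleGraph.mem_edgeFinset.mpr hadj, Sym2.mem_mk_left u v⟩
    have hW : ∀ u v : V, G.Adj u v →
        z s(u, v) * ((∑ f ∈ G.edgeFinset.filter (fun f => u ∈ f), z f)
          + (∑ f ∈ G.edgeFinset.filter (fun f => v ∈ f), z f) - z s(u, v)) ≤ W s(u, v) := by
      intro u v hadj
      rw [hWmk]
      have h1 : z s(u,v) ≤ X u := hzleX u v hadj
      have h2 : z s(u,v) ≤ X v := by
        have := hzleX v u hadj.symm
        rwa [Sym2.eq_swap] at this
      have h3 := hznn s(u,v)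
      nlinarith
    obtain ⟨M, hMsub, hmatch, hsum⟩ :=
      stmt4_greedy G z hznn W hW G.edgeFinset (Finset.Subset.refl _)
    refine ⟨M, hMsub, hmatch, ?_, ?_⟩
    · -- expected value
      have hEV : ∑ S : Finset V, p S * ((M.filter (fun e => ∀ v ∈ e, v ∈ S)).card : ℝ)
          = ∑ e ∈ M, W e := by
        have h1 : ∀ S : Finset V, p S * ((M.filter (fun e => ∀ v ∈ e, v ∈ S)).card : ℝ)
            = ∑ e ∈ M, if (∀ v ∈ e, v ∈ S) then p S else 0 := by
          intro S
          rw [← Finset.sum_filter, Finset.sum_const, nsmul_eq_mul, mul_comm]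
        calc ∑ S : Finset V, p S * ((M.filter (fun e => ∀ v ∈ e, v ∈ S)).card : ℝ)
            = ∑ S : Finset V, ∑ e ∈ M, if (∀ v ∈ e, v ∈ S) then p S else 0 :=
              Finset.sum_congr rfl fun S _ => h1 S
          _ = ∑ e ∈ M, ∑ S : Finset V, if (∀ v ∈ e, v ∈ S) then p S else 0 :=
              Finset.sum_comm
          _ = ∑ e ∈ M, W e := by
              refine Finset.sum_congr rfl fun e he => ?_
              rw [← Finset.sum_filter]
              revert he
              induction e using Sym2.ind with
              | _ u v =>
                intro he
                have hadj : G.Adj u v := by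
                  have := hMsub he
                  rwa [SimpleGraph.mem_edgeFinset, SimpleGraph.mem_edgeSet] at this
                have hfc : (Finset.univ : Finset (Finset V)).filter
                    (fun S => ∀ w ∈ s(u,v), w ∈ S)
                    = (Finset.univ : Finset (Finset V)).filter (fun S => u ∈ S ∧ v ∈ S) := by
                  refine Finset.filter_congr fun S _ => ?_
                  simp [Sym2.mem_iff, or_imp, forall_and]
                rw [hfc, hind u v hadj, hmarg u, hmarg v, ← hzdeg u, ← hzdeg v, hWmk]
      rw [hEV]
      exact hsum
    · -- Cauchy-Schwarz
      intro E₁ E₂ hE₁ hE₂ hdisj hne₁ hne₂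
      have hcs : ∀ (E' : Finset (Sym2 V)), E'.Nonempty →
          (∑ e ∈ E', z e) ^ 2 / (E'.card : ℝ) ≤ ∑ e ∈ E', z e ^ 2 := by
        intro E' hne'
        have hc : (0:ℝ) < E'.card := by exact_mod_cast Finset.card_pos.mpr hne'
        rw [div_le_iff₀ hc]
        have := sq_sum_le_card_mul_sum_sq (s := E') (f := z)
        calc (∑ e ∈ E', z e) ^ 2 ≤ (E'.card : ℝ) * ∑ e ∈ E', z e ^ 2 := by exact_mod_cast this
          _ = (∑ e ∈ E', z e ^ 2) * (E'.card : ℝ) := mul_comm _ _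
      have h1 := hcs E₁ hne₁
      have h2 := hcs E₂ hne₂
      have hsub : E₁ ∪ E₂ ⊆ G.edgeFinset :=
        Finset.union_subset (hE₁.trans (Finset.filter_subset _ _))
          (hE₂.trans (Finset.filter_subset _ _))
      have h3 : ∑ e ∈ E₁, z e ^ 2 + ∑ e ∈ E₂, z e ^ 2 = ∑ e ∈ E₁ ∪ E₂, z e ^ 2 :=
        (Finset.sum_union hdisj).symm
      have h4 : ∑ e ∈ E₁ ∪ E₂, z e ^ 2 ≤ ∑ e ∈ G.edgeFinset, z e ^ 2 :=
        Finset.sum_le_sum_of_subset_of_nonneg hsub (fun e _ _ => sq_nonneg _)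
      linarith
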